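/- Let E be a real inner product space, let λ be a real number with 0 < λ < 1, let t be a natural number, let x : ℕ → E and y : ℕ → ℝ with y(s) = 1 or y(s) = −1 for all s, and let X ≥ 0 be a real number with ‖x(s)‖² ≤ X for all 1 ≤ s ≤ t. Let w : ℕ → E satisfy w(1) = 0 and, for all 1 ≤ s ≤ t, w(s+1) = (1 − 1/s)·w(s) + (1/(λs))·(y(s)·x(s)), and assume y(s)·⟪w(s), x(s)⟫ < 1 for all 1 ≤ s ≤ t. If moreover X ≤ logb 2 t and 1 ≤ logb 2 t (equivalently, max(2^X, 2) ≤ t), then ‖w(t+1)‖² ≤ 6·(logb 2 t)/λ², where logb 2 denotes the base-2 logarithm. -/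

import Mathlib

open RealInnerProductSpace

set_option maxHeartbeats 2000000 in
theorem p2pegasos_final_upper_bound {E : Type*} [NormedAddCommGroup E] [InnerProductSpace ℝ E]
    (lam : ℝ) (hlam0 : 0 < lam) (hlam1 : lam < 1)
    (t : ℕ)
    (x : ℕ → E) (y : ℕ → ℝ) (hy : ∀ s, y s = 1 ∨ y s = -1)
    (X : ℝ) (hX : 0 ≤ X) (hxbound : ∀ s, 1 ≤ s → s ≤ t → ‖x s‖^2 ≤ X)
    (w : ℕ → E) (hw1 : w 1 = 0)
    (hupdate : ∀ s : ℕ, 1 ≤ s → s ≤ t →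
      w (s + 1) = (1 - 1/(s : ℝ)) • w s + (1/(lam * s)) • (y s • x s))
    (hbad : ∀ s : ℕ, 1 ≤ s → s ≤ t → y s * ⟪w s, x s⟫ < 1)
    (hXlog : X ≤ Real.logb 2 t) (hlog : 1 ≤ Real.logb 2 t) :
    ‖w (t + 1)‖^2 ≤ 6 * Real.logb 2 t / lam^2 := by
  set C : ℝ := (2 + X) / lam ^ 2 with hC
  have hlam2 : (0:ℝ) < lam ^ 2 := by positivity
  have key : ∀ s : ℕ, s ≤ t → ‖w (s + 1)‖ ^ 2 ≤ C := by
    intro s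
    induction s with
    | zero =>
      intro _
      rw [hw1]
      simp
      positivity
    | succ k ih =>
      intro hst
      have hk : k ≤ t := Nat.le_of_succ_le hst
      have hB := ih hk
      have h1 : 1 ≤ k + 1 := Nat.le_add_left 1 k
      have hr : (1:ℝ) ≤ ((k+1 : ℕ) : ℝ) := by exact_mod_cast h1
      have hr0 : (0:ℝ) < ((k+1 : ℕ) : ℝ) := lt_of_lt_of_le one_pos hr
      set r : ℝ := ((k+1 : ℕ) : ℝ) with hrdef
      have hy2 : (y (k+1)) ^ 2 = 1 := by
        rcases hy (k+1) with h | h <;> rw [h] <;> norm_num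
      have hupd := hupdate (k+1) h1 hst
      have hAX : ‖x (k+1)‖ ^ 2 ≤ X := hxbound (k+1) h1 hst
      have hA0 : (0:ℝ) ≤ ‖x (k+1)‖ ^ 2 := by positivity
      have hI := hbad (k+1) h1 hst
      have hB0 : (0:ℝ) ≤ ‖w (k+1)‖ ^ 2 := by positivity
      have expand : ‖w (k+1+1)‖ ^ 2 =
          (1 - 1/r)^2 * ‖w (k+1)‖^2
          + 2 * ((1 - 1/r) * (1/(lam * r))) * (y (k+1) * ⟪w (k+1), x (k+1)⟫)
          + (1/(lam * r))^2 * ‖x (k+1)‖^2 := by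
        rw [hupd, @norm_add_sq_real]
        rw [real_inner_smul_left, real_inner_smul_right, real_inner_smul_right]
        simp only [norm_smul, mul_pow, Real.norm_eq_abs, sq_abs, hy2]
        ring
      rw [expand]
      have hu0 : 0 ≤ 1 - 1/r := by
        have : 1/r ≤ 1 := by
          rw [div_le_one hr0]; exact hr
        linarith
      have hu1 : 1 - 1/r ≤ 1 := by
        have : 0 < 1/r := by positivity
        linarith
      have hv0 : 0 < 1/(lam * r) := by positivity
      have huv0 : 0 ≤ (1 - 1/r) * (1/(lam * r)) := mul_nonneg hu0 (le_of_lt hv0)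
      -- 2 u v (y⟪⟫) ≤ 2 u v ≤ 2 v
      have h2 : 2 * ((1 - 1/r) * (1/(lam * r))) * (y (k+1) * ⟪w (k+1), x (k+1)⟫)
          ≤ 2 * (1/(lam * r)) := by
        calc 2 * ((1 - 1/r) * (1/(lam * r))) * (y (k+1) * ⟪w (k+1), x (k+1)⟫)
            ≤ 2 * ((1 - 1/r) * (1/(lam * r))) * 1 := by
              apply mul_le_mul_of_nonneg_left (le_of_lt hI) (by linarith)
          _ ≤ 2 * (1/(lam * r)) := by
              rw [mul_one]
              have := mul_le_of_le_one_left (le_of_lt hv0) hu1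
              linarith
      -- 2 v ≤ 2/(lam² r)
      have h2' : 2 * (1/(lam * r)) ≤ 2 / (lam^2 * r) := by
        rw [mul_one_div, div_le_div_iff₀ (by positivity) (by positivity)]
        nlinarith [mul_le_mul_of_nonneg_right (le_of_lt hlam1) (le_of_lt (mul_pos hlam0 hr0))]
      -- v² A ≤ X/(lam² r)
      have h3 : (1/(lam * r))^2 * ‖x (k+1)‖^2 ≤ X / (lam^2 * r) := by
        have : (1/(lam * r))^2 * ‖x (k+1)‖^2 ≤ (1/(lam * r))^2 * X :=
          mul_le_mul_of_nonneg_left hAX (by positivity)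
        refine this.trans ?_
        rw [div_pow, one_pow, div_mul_eq_mul_div, one_mul, mul_pow]
        have hr2 : r ≤ r^2 := by nlinarith
        have hmono : lam^2 * r ≤ lam^2 * r^2 := by nlinarith
        exact div_le_div_of_nonneg_left hX (by positivity) hmono
      -- u² B ≤ u C = C - C/r
      have hC0 : 0 ≤ C := by positivity
      have h4 : (1 - 1/r)^2 * ‖w (k+1)‖^2 ≤ C - C/r := by
        have hu2 : (1 - 1/r)^2 ≤ 1 - 1/r := by nlinarith
        have h := mul_le_mul hu2 hB hB0 hu0
        calc (1 - 1/r)^2 * ‖w (k+1)‖^2 ≤ (1 - 1/r) * C := h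
          _ = C - C/r := by ring
      have hsum : C - C/r + 2/(lam^2 * r) + X/(lam^2*r) ≤ C := by
        have : C / r = (2 + X) / (lam^2 * r) := by
          rw [hC, div_div]
        rw [this]
        have : 2/(lam^2*r) + X/(lam^2*r) = (2+X)/(lam^2*r) := by
          rw [← add_div]
        linarith
      linarith
  have hfin := key t (le_refl t)
  refine hfin.trans ?_
  rw [hC, div_le_div_iff₀ hlam2 hlam2]
  nlinarith [hlam2]
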